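/- Assume R_0u = b_f φ_u ψ/((μ_a+ψ)μ_fu) > 1. Then the point with A_u⁰ = K_a(1 − 1/R_0u), F_u⁰ = b_f ψ A_u⁰/μ_fu, M_u⁰ = b_m ψ A_u⁰/μ_mu and A_w = F_w = M_w = 0 is an equilibrium of the Wolbachia mosquito model (the vector field vanishes there), and it is the unique such equilibrium with A_w = F_w = M_w = 0 and A_u > 0. -/

import Mathlib

/-- The Wolbachia mosquito model vector field on states
`x = (A_u, A_w, F_u, F_w, M_u, M_w)` (indices 0..5). -/
noncomputable def wolbField (bf vw φu φw ψ μa μfu μfw μmu μmw Ka : ℝ)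
    (x : Fin 6 → ℝ) : Fin 6 → ℝ :=
  ![ φu * x 2 * (x 4 / (x 4 + x 5)) * (1 - (x 0 + x 1) / Ka)
      + (1 - vw) * (φw * x 3 * (x 4 / (x 4 + x 5)) * (1 - (x 0 + x 1) / Ka)
          + φw * x 3 * (1 - x 4 / (x 4 + x 5)) * (1 - (x 0 + x 1) / Ka))
      - (μa + ψ) * x 0,
    vw * (φw * x 3 * (x 4 / (x 4 + x 5)) * (1 - (x 0 + x 1) / Ka)
          + φw * x 3 * (1 - x 4 / (x 4 + x 5)) * (1 - (x 0 + x 1) / Ka))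
      - (μa + ψ) * x 1,
    bf * ψ * x 0 - μfu * x 2,
    bf * ψ * x 1 - μfw * x 3,
    (1 - bf) * ψ * x 0 - μmu * x 4,
    (1 - bf) * ψ * x 1 - μmw * x 5 ]

/-- existence and uniqueness of the disease-free equilibrium. -/
theorem disease_free_equilibrium_exists_unique
    (bf vw φu φw ψ μa μfu μfw μmu μmw Ka : ℝ)
    (hbf : 0 < bf) (hbf1 : bf < 1) (hvw0 : 0 ≤ vw) (hvw1 : vw ≤ 1)
    (hφu : 0 < φu) (hφw : 0 < φw) (hψ : 0 < ψ) (hμa : 0 < μa)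
    (hμfu : 0 < μfu) (hμfw : 0 < μfw) (hμmu : 0 < μmu) (hμmw : 0 < μmw)
    (hKa : 0 < Ka)
    (hR0u : 1 < bf * φu * ψ / ((μa + ψ) * μfu))
    (Au0 : ℝ) (hAu0 : Au0 = Ka * (1 - 1 / (bf * φu * ψ / ((μa + ψ) * μfu))))
    (x0 : Fin 6 → ℝ)
    (hx0 : x0 = ![Au0, 0, bf * ψ * Au0 / μfu, 0, (1 - bf) * ψ * Au0 / μmu, 0]) :
    wolbField bf vw φu φw ψ μa μfu μfw μmu μmw Ka x0 = 0 ∧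
    ∀ x : Fin 6 → ℝ, 0 < x 4 + x 5 →
      wolbField bf vw φu φw ψ μa μfu μfw μmu μmw Ka x = 0 →
      x 1 = 0 → x 3 = 0 → x 5 = 0 → 0 < x 0 → x = x0 := by
  have hμaψ : 0 < μa + ψ := by linarith
  have hAu0' : Au0 = Ka * (1 - (μa + ψ) * μfu / (bf * φu * ψ)) := by
    rw [hAu0, one_div_div]
  have hden : (0:ℝ) < bf * φu * ψ := by positivity
  have hfrac : (μa + ψ) * μfu / (bf * φu * ψ) < 1 := by
    rw [div_lt_one hden]
    have := (one_lt_div (by positivity : (0:ℝ) < (μa + ψ) * μfu)).mp hR0u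
    linarith
  have hAu0pos : 0 < Au0 := by
    rw [hAu0']
    have : 0 < 1 - (μa + ψ) * μfu / (bf * φu * ψ) := by linarith
    positivity
  have hM : 0 < (1 - bf) * ψ * Au0 / μmu := by
    have h1 : (0:ℝ) < 1 - bf := by linarith
    positivity
  have hv0 : x0 0 = Au0 := by rw [hx0]; rfl
  have hv1 : x0 1 = 0 := by rw [hx0]; rfl
  have hv2 : x0 2 = bf * ψ * Au0 / μfu := by rw [hx0]; rfl
  have hv3 : x0 3 = 0 := by rw [hx0]; rfl
  have hv4 : x0 4 = (1 - bf) * ψ * Au0 / μmu := by rw [hx0]; rfl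
  have hv5 : x0 5 = 0 := by rw [hx0]; rfl
  constructor
  · funext i
    fin_cases i
    · show φu * x0 2 * (x0 4 / (x0 4 + x0 5)) * (1 - (x0 0 + x0 1) / Ka)
        + (1 - vw) * (φw * x0 3 * (x0 4 / (x0 4 + x0 5)) * (1 - (x0 0 + x0 1) / Ka)
            + φw * x0 3 * (1 - x0 4 / (x0 4 + x0 5)) * (1 - (x0 0 + x0 1) / Ka))
        - (μa + ψ) * x0 0 = 0
      rw [hv0, hv1, hv2, hv3, hv4, hv5, add_zero, add_zero, div_self hM.ne']
      rw [hAu0']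
      field_simp
      ring
    · show vw * (φw * x0 3 * (x0 4 / (x0 4 + x0 5)) * (1 - (x0 0 + x0 1) / Ka)
          + φw * x0 3 * (1 - x0 4 / (x0 4 + x0 5)) * (1 - (x0 0 + x0 1) / Ka))
        - (μa + ψ) * x0 1 = 0
      rw [hv1, hv3]; ring
    · show bf * ψ * x0 0 - μfu * x0 2 = 0
      rw [hv0, hv2]; field_simp; ring
    · show bf * ψ * x0 1 - μfw * x0 3 = 0
      rw [hv1, hv3]; ring
    · show (1 - bf) * ψ * x0 0 - μmu * x0 4 = 0
      rw [hv0, hv4]; field_simp; ring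
    · show (1 - bf) * ψ * x0 1 - μmw * x0 5 = 0
      rw [hv1, hv5]; ring
  · intro x hM45 heq h1 h3 h5 h0pos
    have e0 := congrFun heq 0
    have e2 := congrFun heq 2
    have e4 := congrFun heq 4
    have E0 : φu * x 2 * (x 4 / (x 4 + x 5)) * (1 - (x 0 + x 1) / Ka)
        + (1 - vw) * (φw * x 3 * (x 4 / (x 4 + x 5)) * (1 - (x 0 + x 1) / Ka)
            + φw * x 3 * (1 - x 4 / (x 4 + x 5)) * (1 - (x 0 + x 1) / Ka))
        - (μa + ψ) * x 0 = 0 := e0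
    have E2 : bf * ψ * x 0 - μfu * x 2 = 0 := e2
    have E4 : (1 - bf) * ψ * x 0 - μmu * x 4 = 0 := e4
    have hx4 : 0 < x 4 := by rw [h5, add_zero] at hM45; exact hM45
    have hx2 : x 2 = bf * ψ * x 0 / μfu := by
      field_simp; linear_combination -E2
    have hx4v : x 4 = (1 - bf) * ψ * x 0 / μmu := by
      field_simp; linear_combination -E4
    rw [h1, h3, h5, add_zero, add_zero, div_self hx4.ne', hx2] at E0
    have hx0v : x 0 = Au0 := by
      rw [hAu0']
      have hc : x 0 * (bf * φu * ψ * (Ka - x 0)) = x 0 * ((μa + ψ) * μfu * Ka) := by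
        field_simp at E0
        linear_combination E0
      have hc2 := mul_left_cancel₀ h0pos.ne' hc
      field_simp
      linear_combination -hc2
    funext i
    fin_cases i
    · show x 0 = x0 0; rw [hv0]; exact hx0v
    · show x 1 = x0 1; rw [hv1]; exact h1
    · show x 2 = x0 2; rw [hv2, hx2, hx0v]
    · show x 3 = x0 3; rw [hv3]; exact h3
    · show x 4 = x0 4; rw [hv4, hx4v, hx0v]
    · show x 5 = x0 5; rw [hv5]; exact h5
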